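/- Let E ⊆ Ẽ be an extension of fields of characteristic zero each equipped with a derivation δ, such that Ẽ and E have the same δ-constants. Let f_0, …, f_n ∈ Ẽ satisfy δf_j ∈ E for all j. If f_0, …, f_n are algebraically dependent over E, then there exist δ-constants c_0, …, c_n ∈ E^δ, not all zero, such that Σ_{j=0}^n c_j f_j ∈ E. -/

import Mathlib

open MvPolynomial

namespace KOaux

variable {Mt : Type*} [Field Mt] [CharZero Mt] (δ : Derivation ℚ Mt Mt) {N : ℕ}

/-- Apply `δ` to every coefficient of a multivariate polynomial. -/
noncomputable def dmap (P : MvPolynomial (Fin N) Mt) : MvPolynomial (Fin N) Mt :=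
  ∑ m ∈ P.support, monomial m (δ (P.coeff m))

lemma coeff_dmap (P : MvPolynomial (Fin N) Mt) (m : Fin N →₀ ℕ) :
    (dmap δ P).coeff m = δ (P.coeff m) := by
  classical
  rw [dmap, coeff_sum]
  simp only [coeff_monomial]
  rw [Finset.sum_ite_eq' P.support m (fun m' => δ (P.coeff m'))]
  by_cases h : m ∈ P.support
  · simp [h]
  · simp [h, notMem_support_iff.mp h]

lemma dmap_C (a : Mt) : dmap δ (C a : MvPolynomial (Fin N) Mt) = C (δ a) := by
  ext m
  rw [coeff_dmap]
  simp only [coeff_C]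
  split_ifs <;> simp

lemma dmap_add (p q : MvPolynomial (Fin N) Mt) :
    dmap δ (p + q) = dmap δ p + dmap δ q := by
  ext m
  simp [coeff_dmap]

lemma dmap_mul_X (p : MvPolynomial (Fin N) Mt) (i : Fin N) :
    dmap δ (p * X i) = dmap δ p * X i := by
  classical
  ext m
  rw [coeff_dmap, coeff_mul_X', coeff_mul_X']
  split_ifs <;> simp [coeff_dmap]

lemma eval_dmap (f : Fin N → Mt) (P : MvPolynomial (Fin N) Mt) :
    δ (eval f P) = eval f (dmap δ P) + ∑ j, δ (f j) * eval f (pderiv j P) := by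
  classical
  induction P using MvPolynomial.induction_on with
  | C a => simp [dmap_C, pderiv_C]
  | add p q hp hq =>
      simp only [map_add, dmap_add, mul_add, Finset.sum_add_distrib, hp, hq]
      ring
  | mul_X p i hp =>
      have hlhs : δ (eval f (p * X i)) =
          (eval f (dmap δ p) + ∑ j, δ (f j) * eval f (pderiv j p)) * f i
            + eval f p * δ (f i) := by
        rw [map_mul, eval_X, δ.leibniz, ← hp]
        simp [smul_eq_mul]
        ring
      rw [hlhs, dmap_mul_X]
      have hpd : ∀ j, eval f (pderiv j (p * X i)) =
          eval f (pderiv j p) * f i + eval f p * (if i = j then 1 else 0) := by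
        intro j
        rw [pderiv_mul, map_add, map_mul, map_mul, eval_X, pderiv_X]
        congr 1
        rw [Pi.single_apply]
        split_ifs with h1 h2 h3 <;> simp_all <;> simp [eq_comm] at *
      simp only [hpd, mul_add, Finset.sum_add_distrib]
      have h1 : ∑ j, δ (f j) * (eval f p * (if i = j then 1 else 0)) = δ (f i) * eval f p := by
        rw [Finset.sum_congr rfl (fun j _ => by rw [mul_ite, mul_ite, mul_one, mul_zero])]
        simp
      rw [h1, map_mul, eval_X,
        Finset.sum_congr rfl (fun j _ => (mul_assoc (δ (f j)) ((eval f) ((pderiv j) p)) (f i)).symm),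
        ← Finset.sum_mul]
      ring

lemma coeff_pderiv (p : MvPolynomial (Fin N) Mt) (j : Fin N) (m : Fin N →₀ ℕ) :
    coeff m (pderiv j p) = ((m j : Mt) + 1) * coeff (m + Finsupp.single j 1) p := by
  classical
  induction p using MvPolynomial.induction_on' with
  | add p q hp hq => simp [hp, hq, mul_add]
  | monomial u a =>
      rw [pderiv_monomial]
      simp only [coeff_monomial]
      by_cases h : u = m + Finsupp.single j 1
      · subst h
        rw [if_pos (add_tsub_cancel_right _ _), if_pos rfl]
        simp [Finsupp.add_apply, Finsupp.single_eq_same]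
        push_cast
        ring
      · rw [if_neg h, mul_zero]
        by_cases h2 : u - Finsupp.single j 1 = m
        · rw [if_pos h2]
          by_cases h3 : u j = 0
          · simp [h3]
          · exfalso
            apply h
            rw [← h2, tsub_add_cancel_of_le]
            exact Finsupp.single_le_iff.mpr (Nat.one_le_iff_ne_zero.mpr h3)
        · rw [if_neg h2]

end KOaux

open MvPolynomial KOaux

/-- Kolchin–Ostrowski (forward direction): if `E ⊆ Ẽ` is a δ-field extension of
characteristic zero with the same δ-constants, `f_0, …, f_n ∈ Ẽ` satisfy `δ f_j ∈ E`,
and the `f_j` are algebraically dependent over `E`, then some nontrivial `E^δ`-linear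
combination `Σ c_j f_j` lies in `E`. -/
theorem kolchin_ostrowski_forward
    (Mt : Type*) [Field Mt] [CharZero Mt] (δ : Derivation ℚ Mt Mt)
    (E : Subfield Mt) (hδE : ∀ a ∈ E, δ a ∈ E)
    (hconst : ∀ c : Mt, δ c = 0 → c ∈ E)
    (n : ℕ) (f : Fin (n + 1) → Mt) (hf : ∀ j, δ (f j) ∈ E)
    (hdep : ¬ AlgebraicIndependent E f) :
    ∃ c : Fin (n + 1) → Mt,
      (∀ j, c j ∈ E ∧ δ (c j) = 0) ∧ (∃ j, c j ≠ 0) ∧ (∑ j, c j * f j) ∈ E := by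
  classical
  -- the "degree" of a monomial
  set degm : (Fin (n + 1) →₀ ℕ) → ℕ := fun m => m.sum fun _ e => e with hdegm_def
  have hdeg_single : ∀ (m : Fin (n + 1) →₀ ℕ) (j : Fin (n + 1)),
      degm (m + Finsupp.single j 1) = degm m + 1 := by
    intro m j
    simp only [hdegm_def]
    rw [Finsupp.sum_add_index' (fun _ => rfl) (fun _ _ _ => rfl),
      Finsupp.sum_single_index rfl]
  have hdeg_zero : ∀ m : Fin (n + 1) →₀ ℕ, degm m = 0 → m = 0 := by
    intro m hm
    ext x
    simp only [Finsupp.coe_zero, Pi.zero_apply]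
    by_contra hx
    have hxs : x ∈ m.support := Finsupp.mem_support_iff.mpr hx
    have : m x ≤ degm m := Finset.single_le_sum (fun _ _ => Nat.zero_le _) hxs
    omega
  have htotal : ∀ p : MvPolynomial (Fin (n + 1)) Mt, p.totalDegree = p.support.sup degm :=
    fun p => rfl
  -- the set of "good" relations
  set good : MvPolynomial (Fin (n + 1)) Mt → Prop :=
    fun P => P ≠ 0 ∧ (∀ m, P.coeff m ∈ E) ∧ eval f P = 0 with hgood_def
  -- extract a polynomial relation from algebraic dependence
  have hex : ∃ P, good P := by
    rw [algebraicIndependent_iff] at hdep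
    push_neg at hdep
    obtain ⟨p, hp0, hpne⟩ := hdep
    refine ⟨MvPolynomial.map (algebraMap E Mt) p, ?_, ?_, ?_⟩
    · intro h
      exact hpne (MvPolynomial.map_injective _ (algebraMap E Mt).injective
        (by simpa using h))
    · intro m
      rw [MvPolynomial.coeff_map]
      exact SetLike.coe_mem _
    · rw [MvPolynomial.eval_map, ← MvPolynomial.aeval_def, hp0]
  -- first minimize the total degree
  set d : ℕ := sInf {k | ∃ P, good P ∧ P.totalDegree = k} with hd_def
  obtain ⟨P₁, hP₁g, hP₁d⟩ : ∃ P, good P ∧ P.totalDegree = d := by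
    obtain ⟨P, hP⟩ := hex
    have h : sInf {k | ∃ P, good P ∧ P.totalDegree = k} ∈
        {k | ∃ P, good P ∧ P.totalDegree = k} :=
      Nat.sInf_mem ⟨P.totalDegree, P, hP, rfl⟩
    rw [hd_def]
    exact h
  have hd_le : ∀ P, good P → d ≤ P.totalDegree := fun P h => Nat.sInf_le ⟨P, h, rfl⟩
  -- then minimize the number of top-degree monomials
  set t : ℕ := sInf {k | ∃ P, (good P ∧ P.totalDegree = d) ∧
      (P.support.filter fun m => degm m = d).card = k} with ht_def
  obtain ⟨P₂, ⟨hP₂g, hP₂d⟩, hP₂t⟩ : ∃ P, (good P ∧ P.totalDegree = d) ∧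
      (P.support.filter fun m => degm m = d).card = t := by
    have h : sInf {k | ∃ P, (good P ∧ P.totalDegree = d) ∧
          (P.support.filter fun m => degm m = d).card = k} ∈
        {k | ∃ P, (good P ∧ P.totalDegree = d) ∧
          (P.support.filter fun m => degm m = d).card = k} :=
      Nat.sInf_mem ⟨_, P₁, ⟨hP₁g, hP₁d⟩, rfl⟩
    rw [ht_def]
    exact h
  have ht_le : ∀ P, good P → P.totalDegree = d →
      t ≤ (P.support.filter fun m => degm m = d).card :=
    fun P h hd => Nat.sInf_le ⟨P, ⟨h, hd⟩, rfl⟩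
  -- a top-degree monomial m₀ of P₂
  obtain ⟨m₀, hm₀mem, hm₀deg⟩ : ∃ m₀ ∈ P₂.support, degm m₀ = d := by
    have hne : P₂.support.Nonempty :=
      Finset.nonempty_iff_ne_empty.mpr (fun h => hP₂g.1 (support_eq_empty.mp h))
    obtain ⟨m₀, hmem, hsup⟩ := Finset.exists_mem_eq_sup P₂.support hne degm
    exact ⟨m₀, hmem, by rw [← hsup, ← htotal, hP₂d]⟩
  -- normalize so that the coefficient at m₀ is 1
  set a : Mt := P₂.coeff m₀ with ha_def
  have ha : a ≠ 0 := mem_support_iff.mp hm₀mem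
  set P : MvPolynomial (Fin (n + 1)) Mt := C a⁻¹ * P₂ with hP_def
  have hcoeff : ∀ m, P.coeff m = a⁻¹ * P₂.coeff m := fun m => coeff_C_mul m _ _
  have hPm₀ : P.coeff m₀ = 1 := by rw [hcoeff, ← ha_def, inv_mul_cancel₀ ha]
  have hsupp : P.support = P₂.support := by
    ext m
    simp only [mem_support_iff, hcoeff]
    constructor
    · intro h h2; exact h (by rw [h2, mul_zero])
    · intro h; exact mul_ne_zero (inv_ne_zero ha) h
  have hPg : good P := by
    refine ⟨fun h => ?_, fun m => ?_, ?_⟩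
    · rw [h, coeff_zero] at hPm₀; exact zero_ne_one hPm₀
    · rw [hcoeff]
      exact E.mul_mem (E.inv_mem (hP₂g.2.1 m₀)) (hP₂g.2.1 m)
    · rw [hP_def, map_mul, eval_C, hP₂g.2.2, mul_zero]
  have hPd : P.totalDegree = d := by rw [htotal, hsupp, ← htotal, hP₂d]
  have hPt : (P.support.filter fun m => degm m = d).card = t := by rw [hsupp, hP₂t]
  -- coefficients above total degree vanish
  have hhigh : ∀ m, d < degm m → P.coeff m = 0 := by
    intro m h
    by_contra hc
    have h2 : degm m ≤ d := by
      rw [← hPd]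
      exact le_totalDegree (mem_support_iff.mpr hc)
    omega
  -- the derived relation Q
  set Q : MvPolynomial (Fin (n + 1)) Mt :=
    dmap δ P + ∑ j, C (δ (f j)) * pderiv j P with hQ_def
  have hcoeffQ : ∀ m, Q.coeff m =
      δ (P.coeff m) + ∑ j, δ (f j) * (((m j : Mt) + 1) * P.coeff (m + Finsupp.single j 1)) := by
    intro m
    rw [hQ_def, coeff_add, coeff_dmap, coeff_sum]
    congr 1
    refine Finset.sum_congr rfl fun j _ => ?_
    rw [coeff_C_mul, KOaux.coeff_pderiv]
  have hQeval : eval f Q = 0 := by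
    have h1 : eval f Q = eval f (dmap δ P) + ∑ j, δ (f j) * eval f (pderiv j P) := by
      rw [hQ_def, map_add, map_sum]
      congr 1
      exact Finset.sum_congr rfl fun j _ => by rw [map_mul, eval_C]
    rw [h1, ← eval_dmap, hPg.2.2, map_zero]
  have hQE : ∀ m, Q.coeff m ∈ E := by
    intro m
    rw [hcoeffQ]
    refine E.add_mem (hδE _ (hPg.2.1 m)) (Subfield.sum_mem E fun j _ => ?_)
    exact E.mul_mem (hf j)
      (E.mul_mem (E.add_mem (natCast_mem E _) E.one_mem) (hPg.2.1 _))
  -- coefficients of Q at top degree and above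
  have htopQ : ∀ m, degm m = d → Q.coeff m = δ (P.coeff m) := by
    intro m hm
    rw [hcoeffQ]
    have : ∀ j : Fin (n + 1),
        δ (f j) * (((m j : Mt) + 1) * P.coeff (m + Finsupp.single j 1)) = 0 := by
      intro j
      rw [hhigh _ (by rw [hdeg_single]; omega), mul_zero, mul_zero]
    rw [Finset.sum_congr rfl fun j _ => this j, Finset.sum_const_zero, add_zero]
  have hhighQ : ∀ m, d < degm m → Q.coeff m = 0 := by
    intro m hm
    rw [hcoeffQ, hhigh m hm, map_zero, zero_add]
    refine Finset.sum_eq_zero fun j _ => ?_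
    rw [hhigh _ (by rw [hdeg_single]; omega), mul_zero, mul_zero]
  -- Q must vanish, by minimality
  have hQ0 : Q = 0 := by
    by_contra hQ
    have hQg : good Q := ⟨hQ, hQE, hQeval⟩
    have hQd_le : Q.totalDegree ≤ d := by
      rw [htotal]
      refine Finset.sup_le fun m hm => ?_
      by_contra h
      exact mem_support_iff.mp hm (hhighQ m (by omega))
    have hQd : Q.totalDegree = d := le_antisymm hQd_le (hd_le Q hQg)
    have hsub : (Q.support.filter fun m => degm m = d) ⊆
        (P.support.filter fun m => degm m = d).erase m₀ := by
      intro m hm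
      rw [Finset.mem_filter] at hm
      obtain ⟨hmem, hdeg⟩ := hm
      have hQc : Q.coeff m = δ (P.coeff m) := htopQ m hdeg
      rw [Finset.mem_erase, Finset.mem_filter]
      refine ⟨?_, ?_, hdeg⟩
      · intro h
        refine mem_support_iff.mp hmem ?_
        rw [h, htopQ m₀ hm₀deg, hPm₀]
        exact δ.map_one_eq_zero
      · rw [mem_support_iff]
        intro h
        rw [h, map_zero] at hQc
        exact mem_support_iff.mp hmem hQc
    have hm₀f : m₀ ∈ P.support.filter fun m => degm m = d := by
      rw [Finset.mem_filter, hsupp]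
      exact ⟨hm₀mem, hm₀deg⟩
    have h1 : t ≤ (Q.support.filter fun m => degm m = d).card := ht_le Q hQg hQd
    have h2 : (Q.support.filter fun m => degm m = d).card ≤
        ((P.support.filter fun m => degm m = d).erase m₀).card :=
      Finset.card_le_card hsub
    rw [Finset.card_erase_of_mem hm₀f, hPt] at h2
    have h3 : 1 ≤ t := by
      rw [← hPt]
      exact Finset.card_pos.mpr ⟨m₀, hm₀f⟩
    omega
  have hQc0 : ∀ m, Q.coeff m = 0 := fun m => by rw [hQ0, coeff_zero]
  -- total degree is at least 1
  have hd1 : 1 ≤ d := by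
    by_contra h
    have hd0 : d = 0 := by omega
    have hm₀0 : m₀ = 0 := hdeg_zero m₀ (by rw [hm₀deg, hd0])
    have hs : P.support = {0} := by
      apply Finset.Subset.antisymm
      · intro m hm
        rw [Finset.mem_singleton]
        refine hdeg_zero m ?_
        have h2 : degm m ≤ d := by
          rw [← hPd]
          exact le_totalDegree hm
        omega
      · intro m hm
        rw [Finset.mem_singleton] at hm
        rw [hm, ← hm₀0, hsupp]
        exact hm₀mem
    have hPC : P = C 1 := by
      conv_lhs => rw [as_sum P]
      rw [hs, Finset.sum_singleton, ← hm₀0, hPm₀, hm₀0, monomial_zero']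
    have hev : eval f P = 0 := hPg.2.2
    rw [hPC, eval_C] at hev
    exact one_ne_zero hev
  -- select a variable occurring in m₀
  obtain ⟨k, hk⟩ : ∃ k, m₀ k ≠ 0 := by
    by_contra h
    push_neg at h
    have : m₀ = 0 := Finsupp.ext h
    rw [this] at hm₀deg
    simp only [hdegm_def, Finsupp.sum_zero_index] at hm₀deg
    omega
  set m : Fin (n + 1) →₀ ℕ := m₀ - Finsupp.single k 1 with hm_def
  have hmk : m + Finsupp.single k 1 = m₀ :=
    tsub_add_cancel_of_le (Finsupp.single_le_iff.mpr (Nat.one_le_iff_ne_zero.mpr hk))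
  have hmdeg : ∀ j, degm (m + Finsupp.single j 1) = d := by
    have h0 : degm m + 1 = d := by rw [← hdeg_single m k, hmk, hm₀deg]
    intro j
    rw [hdeg_single, h0]
  -- the constants
  set b : Fin (n + 1) → Mt := fun j => P.coeff (m + Finsupp.single j 1) with hb_def
  have hbE : ∀ j, b j ∈ E := fun j => hPg.2.1 _
  have hb0 : ∀ j, δ (b j) = 0 := by
    intro j
    have := hQc0 (m + Finsupp.single j 1)
    rw [htopQ _ (hmdeg j)] at this
    exact this
  refine ⟨fun j => ((m j : Mt) + 1) * b j, fun j => ⟨?_, ?_⟩, ⟨k, ?_⟩, ?_⟩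
  · exact E.mul_mem (E.add_mem (natCast_mem E _) E.one_mem) (hbE j)
  · show δ (((m j : Mt) + 1) * b j) = 0
    have hnc : δ ((m j : Mt) + 1) = 0 := by
      have hcast : ((m j : Mt) + 1) = ((m j + 1 : ℕ) : Mt) := by push_cast; ring
      rw [hcast, Derivation.map_natCast]
    rw [δ.leibniz, hb0 j, hnc, smul_zero, smul_zero, add_zero]
  · show ((m k : Mt) + 1) * b k ≠ 0
    have hbk : b k = 1 := by
      show P.coeff (m + Finsupp.single k 1) = 1
      rw [hmk, hPm₀]
    rw [hbk, mul_one]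
    exact Nat.cast_add_one_ne_zero (m k)
  · show (∑ j, ((m j : Mt) + 1) * b j * f j) ∈ E
    have hkey : δ (P.coeff m + ∑ j, ((m j : Mt) + 1) * b j * f j) = 0 := by
      have h1 : δ (∑ j, ((m j : Mt) + 1) * b j * f j)
          = ∑ j, ((m j : Mt) + 1) * b j * δ (f j) := by
        rw [map_sum]
        refine Finset.sum_congr rfl fun j _ => ?_
        rw [δ.leibniz, smul_eq_mul, smul_eq_mul]
        have hnc : δ (((m j : Mt) + 1) * b j) = 0 := by
          have hcast : ((m j : Mt) + 1) = ((m j + 1 : ℕ) : Mt) := by push_cast; ring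
          rw [δ.leibniz, hb0 j, hcast, Derivation.map_natCast, smul_zero, smul_zero,
            add_zero]
        rw [hnc, mul_zero, add_zero, mul_comm]
      rw [map_add, h1]
      have := hQc0 m
      rw [hcoeffQ] at this
      rw [← this]
      congr 1
      exact Finset.sum_congr rfl fun j _ => by ring
    have hmem := hconst _ hkey
    have : (∑ j, ((m j : Mt) + 1) * b j * f j)
        = (P.coeff m + ∑ j, ((m j : Mt) + 1) * b j * f j) - P.coeff m := by ring
    rw [this]
    exact E.sub_mem hmem (hPg.2.1 m)
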